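/- arXiv:0902.2919 — 2 statements merged into one kernel-verified Lean document; each statement's English description precedes it below -/
import Mathlib

section
/- With M and x = (9,13,13,13,13,13) as above, x cannot be written as a non-negative integral linear combination of any six of the ten rows of M. In particular, the cone C does not satisfy the integral Carathéodory property. -/
/-- The `10 × 6` matrix of Bruns et al. -/
def M : Matrix (Fin 10) (Fin 6) ℤ :=
  !![0, 1, 0, 0, 0, 0;
     0, 0, 1, 0, 0, 0;
     0, 0, 0, 1, 0, 0;
     0, 0, 0, 0, 1, 0;
     0, 0, 0, 0, 0, 1;
     1, 0, 2, 1, 1, 2;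
     1, 2, 0, 2, 1, 1;
     1, 1, 2, 0, 2, 1;
     1, 1, 1, 2, 0, 2;
     1, 2, 1, 1, 2, 0]

/-- The test vector `x = (9,13,13,13,13,13)`. -/
def xvec : Fin 6 → ℤ := ![9, 13, 13, 13, 13, 13]

/-- Indicator of a natural number being zero. -/
def zf (n : ℕ) : ℕ := if n = 0 then 1 else 0

lemma cons_val_five' {α : Type*} (a0 a1 a2 a3 a4 a5 : α) :
    ![a0, a1, a2, a3, a4, a5] (5 : Fin 6) = a5 := rfl

set_option synthInstance.maxHeartbeats 4000000 in
set_option synthInstance.maxSize 10000 in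
set_option maxHeartbeats 16000000 in
/-- Exhaustive check over all `(c₅,…,c₉)` with `c₅+⋯+c₉ = 9`: whenever the five
"a-coordinates" `13 - L_j` are nonnegative, at most 3 of the ten coefficients vanish. -/
lemma key' : ∀ b5 < 10, ∀ b6 < 10 - b5, ∀ b7 < 10 - b5 - b6, ∀ b8 < 10 - b5 - b6 - b7,
    ∀ b9 < 10 - b5 - b6 - b7 - b8, b5 + b6 + b7 + b8 + b9 = 9 →
    2*b6 + b7 + b8 + 2*b9 ≤ 13 → 2*b5 + 2*b7 + b8 + b9 ≤ 13 →
    b5 + 2*b6 + 2*b8 + b9 ≤ 13 → b5 + b6 + 2*b7 + 2*b9 ≤ 13 →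
    2*b5 + b6 + b7 + 2*b8 ≤ 13 →
    zf (13 - (2*b6 + b7 + b8 + 2*b9)) + zf (13 - (2*b5 + 2*b7 + b8 + b9)) +
    zf (13 - (b5 + 2*b6 + 2*b8 + b9)) + zf (13 - (b5 + b6 + 2*b7 + 2*b9)) +
    zf (13 - (2*b5 + b6 + b7 + 2*b8)) +
    zf b5 + zf b6 + zf b7 + zf b8 + zf b9 ≤ 3 := by decide

/-- `x = (9,13,13,13,13,13)` cannot be written as a non-negative integral
combination of six of the ten rows of `M`; hence the cone generated by the rows
of `M` fails the integral Carathéodory property. -/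
theorem no_integral_caratheodory :
    ¬ ∃ c : Fin 10 → ℕ,
        (Finset.univ.filter fun i => c i ≠ 0).card ≤ 6 ∧
        ∀ j, ∑ i, (c i : ℤ) * M i j = xvec j := by
  rintro ⟨c, hcard, hs⟩
  have E0 := hs 0
  have E1 := hs 1
  have E2 := hs 2
  have E3 := hs 3
  have E4 := hs 4
  have E5 := hs 5
  simp [M, xvec, Fin.sum_univ_succ, Fin.succ, Fin.add_def, cons_val_five'] at E0 E1 E2 E3 E4 E5
  -- natural number versions of the six linear equations
  have e0 : c 5 + c 6 + c 7 + c 8 + c 9 = 9 := by omega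
  have e1 : c 0 + (2 * c 6 + c 7 + c 8 + 2 * c 9) = 13 := by omega
  have e2 : c 1 + (2 * c 5 + 2 * c 7 + c 8 + c 9) = 13 := by omega
  have e3 : c 2 + (c 5 + 2 * c 6 + 2 * c 8 + c 9) = 13 := by omega
  have e4 : c 3 + (c 5 + c 6 + 2 * c 7 + 2 * c 9) = 13 := by omega
  have e5 : c 4 + (2 * c 5 + c 6 + c 7 + 2 * c 8) = 13 := by omega
  -- at least 4 of the c i are zero
  have hzcard : 4 ≤ (Finset.univ.filter fun i => c i = 0).card := by
    have h := Finset.card_filter_add_card_filter_not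
      (s := (Finset.univ : Finset (Fin 10))) (p := fun i => c i = 0)
    simp only [Finset.card_univ, Fintype.card_fin] at h
    have : (Finset.univ.filter fun i => ¬ c i = 0).card ≤ 6 := by
      convert hcard using 2
    omega
  have hzsum : (Finset.univ.filter fun i => c i = 0).card = ∑ i, zf (c i) := by
    rw [Finset.card_filter]
    refine Finset.sum_congr rfl fun i _ => ?_
    by_cases h : c i = 0 <;> simp [zf, h]
  simp [Fin.sum_univ_succ, Fin.succ, Fin.add_def] at hzsum
  have K := key' (c 5) (by omega) (c 6) (by omega) (c 7) (by omega) (c 8) (by omega)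
    (c 9) (by omega) e0 (by omega) (by omega) (by omega) (by omega) (by omega)
  have r1 : 13 - (2 * c 6 + c 7 + c 8 + 2 * c 9) = c 0 := by omega
  have r2 : 13 - (2 * c 5 + 2 * c 7 + c 8 + c 9) = c 1 := by omega
  have r3 : 13 - (c 5 + 2 * c 6 + 2 * c 8 + c 9) = c 2 := by omega
  have r4 : 13 - (c 5 + c 6 + 2 * c 7 + 2 * c 9) = c 3 := by omega
  have r5 : 13 - (2 * c 5 + c 6 + c 7 + 2 * c 8) = c 4 := by omega
  rw [r1, r2, r3, r4, r5] at K
  omega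
end

section
/- The cone C generated by the rows of the matrix M above is pointed: it contains no line, equivalently C ∩ (-C) = {0}. -/
lemma M_nonneg : ∀ i j, (0 : ℝ) ≤ (M i j : ℝ) := by
  intro i j
  have h : (0 : ℤ) ≤ M i j := by fin_cases i <;> fin_cases j <;> decide
  exact_mod_cast h

lemma M_rowsum_pos : ∀ i, (0 : ℝ) < ∑ j, (M i j : ℝ) := by
  intro i
  have h : (0 : ℤ) < ∑ j, M i j := by revert i; decide
  have : ((∑ j, M i j : ℤ) : ℝ) = ∑ j, (M i j : ℝ) := by push_cast; ring
  rw [← this]; exact_mod_cast h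

/-- The cone `C` generated by the rows of `M` is pointed: `C ∩ (-C) = {0}`. -/
theorem cone_pointed (v : Fin 6 → ℝ)
    (h₁ : ∃ lam : Fin 10 → ℝ, (∀ i, 0 ≤ lam i) ∧
      ∀ j, ∑ i, lam i * (M i j : ℝ) = v j)
    (h₂ : ∃ mu : Fin 10 → ℝ, (∀ i, 0 ≤ mu i) ∧
      ∀ j, ∑ i, mu i * (M i j : ℝ) = -v j) :
    v = 0 := by
  obtain ⟨lam, hlam, hl⟩ := h₁
  obtain ⟨mu, hmu, hm⟩ := h₂
  have key : ∑ i, (lam i + mu i) * (∑ j, (M i j : ℝ)) = 0 := by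
    calc ∑ i, (lam i + mu i) * (∑ j, (M i j : ℝ))
        = ∑ i, ∑ j, (lam i * M i j + mu i * M i j) := by
          simp [Finset.mul_sum, add_mul]
      _ = ∑ j, ∑ i, (lam i * M i j + mu i * M i j) := Finset.sum_comm
      _ = ∑ j, (∑ i, lam i * M i j + ∑ i, mu i * M i j) := by
          simp [Finset.sum_add_distrib]
      _ = ∑ j, (v j + (-v j)) := by simp only [hl, hm]
      _ = 0 := by simp
  have hterm : ∀ i ∈ Finset.univ, (lam i + mu i) * (∑ j, (M i j : ℝ)) = 0 := by
    rw [← Finset.sum_eq_zero_iff_of_nonneg]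
    · exact key
    · intro i _
      exact mul_nonneg (add_nonneg (hlam i) (hmu i)) (M_rowsum_pos i).le
  have hlam0 : ∀ i, lam i = 0 := by
    intro i
    have h := hterm i (Finset.mem_univ i)
    have hc : lam i + mu i = 0 := by
      rcases mul_eq_zero.mp h with h' | h'
      · exact h'
      · exact absurd h' (M_rowsum_pos i).ne'
    linarith [hlam i, hmu i]
  funext j
  have := hl j
  simp only [hlam0, zero_mul, Finset.sum_const_zero] at this
  exact (this.symm : v j = 0)
end
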